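/- For every N ≥ 1 and every j ≥ 0, the coefficient of q^j in F_N (an element of ℚ[x]) is a polynomial of degree at most j in x. -/

import Mathlib

noncomputable section

/-- Predicate: all coefficients satisfy the degree bound. -/
def DegBdd (f : PowerSeries (Polynomial ℚ)) : Prop :=
  ∀ j : ℕ, (PowerSeries.coeff (R := Polynomial ℚ) j f).degree ≤ (j : WithBot ℕ)

lemma degBdd_one : DegBdd 1 := by
  intro j
  rw [PowerSeries.coeff_one]
  split
  · subst ‹j = 0›
    simp [Polynomial.degree_one]
  · simp

lemma degBdd_mul {f g : PowerSeries (Polynomial ℚ)} (hf : DegBdd f) (hg : DegBdd g) :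
    DegBdd (f * g) := by
  intro j
  rw [PowerSeries.coeff_mul]
  refine (Polynomial.degree_sum_le _ _).trans (Finset.sup_le fun p hp => ?_)
  have hpj : p.1 + p.2 = j := Finset.HasAntidiagonal.mem_antidiagonal.mp hp
  refine (Polynomial.degree_mul_le _ _).trans ?_
  calc (PowerSeries.coeff (R := Polynomial ℚ) p.1 f).degree
        + (PowerSeries.coeff (R := Polynomial ℚ) p.2 g).degree
      ≤ (p.1 : WithBot ℕ) + (p.2 : WithBot ℕ) := add_le_add (hf p.1) (hg p.2)
    _ = ((p.1 + p.2 : ℕ) : WithBot ℕ) := by push_cast; ring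
    _ = (j : WithBot ℕ) := by rw [hpj]

lemma degBdd_add {f g : PowerSeries (Polynomial ℚ)} (hf : DegBdd f) (hg : DegBdd g) :
    DegBdd (f + g) := by
  intro j
  rw [map_add]
  exact (Polynomial.degree_add_le _ _).trans (max_le (hf j) (hg j))

lemma degBdd_C_mul_X_pow {p : Polynomial ℚ} {m : ℕ} (hp : p.degree ≤ (m : WithBot ℕ)) :
    DegBdd (PowerSeries.C (R := Polynomial ℚ) p * PowerSeries.X ^ m) := by
  intro j
  rw [PowerSeries.coeff_C_mul, PowerSeries.coeff_X_pow]
  split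
  · subst ‹j = m›
    simpa using hp
  · simp

lemma degBdd_X_pow (m : ℕ) : DegBdd (PowerSeries.X ^ m : PowerSeries (Polynomial ℚ)) := by
  intro j
  rw [PowerSeries.coeff_X_pow]
  split
  · simp [Polynomial.degree_one]
  · simp

lemma degBdd_prod {s : Finset ℕ} {f : ℕ → PowerSeries (Polynomial ℚ)}
    (h : ∀ m ∈ s, DegBdd (f m)) : DegBdd (∏ m ∈ s, f m) :=
  Finset.prod_induction f DegBdd (fun _ _ => degBdd_mul) degBdd_one h

lemma degBdd_inverse (N : ℕ) :
    DegBdd (Ring.inverse (∏ m ∈ Finset.Icc 1 N,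
      (1 - PowerSeries.X ^ m) ^ 4 : PowerSeries (Polynomial ℚ))) := by
  set B₀ : PowerSeries ℚ := ∏ m ∈ Finset.Icc 1 N, (1 - PowerSeries.X ^ m) ^ 4 with hB₀
  have hmap : PowerSeries.map (Polynomial.C : ℚ →+* Polynomial ℚ) B₀
      = ∏ m ∈ Finset.Icc 1 N, (1 - PowerSeries.X ^ m) ^ 4 := by
    rw [hB₀, map_prod]
    refine Finset.prod_congr rfl fun m _ => ?_
    rw [map_pow, map_sub, map_one, map_pow, PowerSeries.map_X]
  have hu : IsUnit B₀ := by
    rw [PowerSeries.isUnit_iff_constantCoeff]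
    have : PowerSeries.constantCoeff (R := ℚ) B₀ = 1 := by
      rw [hB₀, map_prod]
      refine Finset.prod_eq_one fun m hm => ?_
      have hm1 : 1 ≤ m := (Finset.mem_Icc.mp hm).1
      rw [map_pow, map_sub, map_one, map_pow, PowerSeries.constantCoeff_X]
      simp [zero_pow (by omega : m ≠ 0)]
    rw [this]; exact isUnit_one
  obtain ⟨u, hu'⟩ := hu
  have key : Ring.inverse (∏ m ∈ Finset.Icc 1 N,
      (1 - PowerSeries.X ^ m) ^ 4 : PowerSeries (Polynomial ℚ))
      = PowerSeries.map (Polynomial.C : ℚ →+* Polynomial ℚ) (Ring.inverse B₀) := by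
    rw [← hmap, ← hu', Ring.inverse_unit]
    have : PowerSeries.map (Polynomial.C : ℚ →+* Polynomial ℚ) (u : PowerSeries ℚ)
        = (Units.map (PowerSeries.map (Polynomial.C : ℚ →+* Polynomial ℚ)).toMonoidHom u :
            PowerSeries (Polynomial ℚ)) := rfl
    rw [this, Ring.inverse_unit]
    rfl
  rw [key]
  intro j
  rw [PowerSeries.coeff_map]
  exact Polynomial.degree_C_le.trans (by exact_mod_cast Nat.zero_le j)

/-- The truncated product expansion `F_N` of `−φ_{−2,1}(τ,z)/x` in `ℚ[x]⟦q⟧`: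
`F_N = ∏_{m=1}^{N} (1 + (x−2)q^m + q^{2m})² · ∏_{m=1}^{N} (1 − q^m)^{−4}`. -/
def F (N : ℕ) : PowerSeries (Polynomial ℚ) :=
  (∏ m ∈ Finset.Icc 1 N,
      (1 + PowerSeries.C (R := Polynomial ℚ) (Polynomial.X - 2) * PowerSeries.X ^ m
         + PowerSeries.X ^ (2 * m)) ^ 2) *
  Ring.inverse (∏ m ∈ Finset.Icc 1 N, (1 - PowerSeries.X ^ m) ^ 4)

/-- For every `N ≥ 1` and every `j ≥ 0`, the coefficient of `q^j` in `F_N` is a polynomial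
of degree at most `j` in `x`. -/
theorem coeff_F_degree_le (N : ℕ) (hN : 1 ≤ N) (j : ℕ) :
    (PowerSeries.coeff (R := Polynomial ℚ) j (F N)).degree ≤ (j : WithBot ℕ) := by
  have h1 : DegBdd (∏ m ∈ Finset.Icc 1 N,
      (1 + PowerSeries.C (R := Polynomial ℚ) (Polynomial.X - 2) * PowerSeries.X ^ m
         + PowerSeries.X ^ (2 * m)) ^ 2) := by
    refine degBdd_prod fun m hm => ?_
    have hm1 : 1 ≤ m := (Finset.mem_Icc.mp hm).1
    rw [sq]
    have hfac : DegBdd (1 + PowerSeries.C (R := Polynomial ℚ) (Polynomial.X - 2) * PowerSeries.X ^ m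
         + PowerSeries.X ^ (2 * m)) := by
      refine degBdd_add (degBdd_add degBdd_one (degBdd_C_mul_X_pow ?_)) (degBdd_X_pow _)
      refine (Polynomial.degree_sub_le _ _).trans (max_le ?_ ?_)
      · rw [Polynomial.degree_X]
        exact_mod_cast hm1
      · exact (Polynomial.degree_le_zero_iff.mpr (by rw [Polynomial.coeff_ofNat_zero]; rfl)).trans
          (by exact_mod_cast Nat.zero_le m)
    exact degBdd_mul hfac hfac
  exact degBdd_mul h1 (degBdd_inverse N) j

end
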